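/- Let S and P be symmetric involutions of an n-dimensional real inner product space, r = dim E₊(S), and define A₋ := n² + (tr S)² − (tr P)² − (tr(SP))² + tr(SPSP) − n + 2n·tr(S) − 2·tr(P)·tr(SP). If {ξ₁,…,ξ_r} is an orthonormal basis of E₊(S), then A₋ = 4( r² − r + Σ_{i≠j} ( ⟨Pξᵢ, ξⱼ⟩² − ⟨Pξᵢ, ξᵢ⟩⟨Pξⱼ, ξⱼ⟩ ) ). -/

import Mathlib

open scoped RealInnerProductSpace
open Module

private lemma trace_eq_sum_inner_onb' {V : Type*} [NormedAddCommGroup V]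
    [InnerProductSpace ℝ V] [FiniteDimensional ℝ V] {ι : Type*} [Fintype ι] [DecidableEq ι]
    (b : OrthonormalBasis ι ℝ V) (T : V →ₗ[ℝ] V) :
    LinearMap.trace ℝ V T = ∑ i, ⟪b i, T (b i)⟫ := by
  rw [LinearMap.trace_eq_matrix_trace ℝ b.toBasis, Matrix.trace]
  congr 1; ext i
  rw [Matrix.diag_apply, LinearMap.toMatrix_apply, OrthonormalBasis.coe_toBasis,
    OrthonormalBasis.coe_toBasis_repr_apply, OrthonormalBasis.repr_apply_apply]

theorem A_minus_formula {V : Type*} [NormedAddCommGroup V]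
    [InnerProductSpace ℝ V] [FiniteDimensional ℝ V] (n r : ℕ)
    (hn : finrank ℝ V = n) (S P : V →ₗ[ℝ] V)
    (hSsym : ∀ x y : V, ⟪S x, y⟫ = ⟪x, S y⟫) (hSinv : ∀ x : V, S (S x) = x)
    (hPsym : ∀ x y : V, ⟪P x, y⟫ = ⟪x, P y⟫) (hPinv : ∀ x : V, P (P x) = x)
    (hr : finrank ℝ ↥(Module.End.eigenspace S (1 : ℝ)) = r)
    (ξ : Fin r → V) (hortho : Orthonormal ℝ ξ)
    (hmem : ∀ i, ξ i ∈ Module.End.eigenspace S (1 : ℝ))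
    (hspan : Submodule.span ℝ (Set.range ξ) = Module.End.eigenspace S (1 : ℝ)) :
    (n : ℝ) ^ 2 + (LinearMap.trace ℝ V S) ^ 2 - (LinearMap.trace ℝ V P) ^ 2
        - (LinearMap.trace ℝ V (S ∘ₗ P)) ^ 2 + LinearMap.trace ℝ V (S ∘ₗ P ∘ₗ S ∘ₗ P)
        - (n : ℝ) + 2 * (n : ℝ) * LinearMap.trace ℝ V S
        - 2 * LinearMap.trace ℝ V P * LinearMap.trace ℝ V (S ∘ₗ P) =
      4 * ((r : ℝ) ^ 2 - (r : ℝ) +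
        ∑ i, ∑ j, if i = j then 0 else
          ⟪P (ξ i), ξ j⟫ ^ 2 - ⟪P (ξ i), ξ i⟫ * ⟪P (ξ j), ξ j⟫) := by
  set K := Module.End.eigenspace S (1 : ℝ) with hKdef
  have hKfix : ∀ x ∈ K, S x = x := by
    intro x hx
    have := Module.End.mem_eigenspace_iff.mp hx
    simpa using this
  have hKperp : ∀ x ∈ Kᗮ, S x = -x := by
    intro x hx
    have h1 : x + S x ∈ K :=
      Module.End.mem_eigenspace_iff.mpr (by simp [map_add, hSinv x, add_comm])
    have h2 : x + S x ∈ Kᗮ := by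
      rw [Submodule.mem_orthogonal]
      intro u hu
      rw [inner_add_right, ← hSsym, hKfix u hu]
      have := (Submodule.mem_orthogonal K x).mp hx u hu
      linarith
    have h0 : x + S x = 0 :=
      inner_self_eq_zero.mp ((Submodule.mem_orthogonal K (x + S x)).mp h2 _ h1)
    exact eq_neg_of_add_eq_zero_right h0
  set m := finrank ℝ Kᗮ with hm
  set η : OrthonormalBasis (Fin m) ℝ Kᗮ := stdOrthonormalBasis ℝ Kᗮ with hη
  set e : Fin r ⊕ Fin m → V := Sum.elim ξ (fun j => (η j : V)) with he
  have hmemperp : ∀ j, (η j : V) ∈ Kᗮ := fun j => SetLike.coe_mem _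
  have heon : Orthonormal ℝ e := by
    rw [orthonormal_iff_ite]
    have hξ := orthonormal_iff_ite.mp hortho
    have hη' := orthonormal_iff_ite.mp η.orthonormal
    rintro (i | i) (j | j)
    · simpa [he] using hξ i j
    · simpa [he] using (Submodule.mem_orthogonal K _).mp (hmemperp j) _ (hmem i)
    · simp only [he, Sum.elim_inl, Sum.elim_inr]
      rw [real_inner_comm]
      simpa using (Submodule.mem_orthogonal K _).mp (hmemperp i) _ (hmem j)
    · have := hη' i j
      rw [Submodule.coe_inner] at this
      simpa [he] using this
  have hespan : ⊤ ≤ Submodule.span ℝ (Set.range e) := by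
    rw [he, Set.Sum.elim_range, Submodule.span_union]
    have h1 : Submodule.span ℝ (Set.range ξ) = K := hspan
    have h2 : Submodule.span ℝ (Set.range fun j => (η j : V)) = Kᗮ := by
      have him : Set.range (fun j => (η j : V)) = (Kᗮ.subtype) '' (Set.range η) := by
        ext x; simp [Set.range_comp]
      rw [him, Submodule.span_image]
      have hsp : Submodule.span ℝ (Set.range η) = ⊤ := by
        rw [← OrthonormalBasis.coe_toBasis]; exact η.toBasis.span_eq
      rw [hsp, Submodule.map_top, Submodule.range_subtype]
    rw [h1, h2, Submodule.sup_orthogonal_of_hasOrthogonalProjection]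
  set b : OrthonormalBasis (Fin r ⊕ Fin m) ℝ V := OrthonormalBasis.mk heon hespan with hb
  have hbe : ∀ k, b k = e k := fun k => by rw [hb, OrthonormalBasis.coe_mk]
  -- basic facts
  have hSe1 : ∀ i, S (ξ i) = ξ i := fun i => hKfix _ (hmem i)
  have hSe2 : ∀ j, S ((η j : V)) = -(η j : V) := fun j => hKperp _ (hmemperp j)
  have hone1 : ∀ i, ⟪ξ i, ξ i⟫ = (1 : ℝ) := fun i => by
    simpa using (orthonormal_iff_ite.mp hortho) i i
  have hone2 : ∀ j, ⟪(η j : V), (η j : V)⟫ = (1 : ℝ) := fun j => by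
    have := (orthonormal_iff_ite.mp η.orthonormal) j j
    rw [Submodule.coe_inner] at this
    simpa using this
  have hPP : ∀ x : V, ⟪P x, P x⟫ = ⟪x, x⟫ := fun x => by rw [hPsym, hPinv]
  -- Parseval-type lemmas
  have hSx : ∀ x : V, ⟪x, S x⟫ = (∑ i, ⟪ξ i, x⟫ ^ 2) - ∑ j, ⟪(η j : V), x⟫ ^ 2 := by
    intro x
    have l1 : ∀ i : Fin r, ⟪x, e (Sum.inl i)⟫ * ⟪e (Sum.inl i), S x⟫ = ⟪ξ i, x⟫ ^ 2 := by
      intro i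
      simp only [he, Sum.elim_inl]
      rw [← hSsym, hSe1, real_inner_comm x (ξ i), sq]
    have l2 : ∀ j : Fin m,
        ⟪x, e (Sum.inr j)⟫ * ⟪e (Sum.inr j), S x⟫ = -(⟪(η j : V), x⟫ ^ 2) := by
      intro j
      simp only [he, Sum.elim_inr]
      rw [← hSsym, hSe2, inner_neg_left, real_inner_comm x, sq]
      ring
    rw [← b.sum_inner_mul_inner x (S x)]
    simp only [hbe]
    rw [Fintype.sum_sum_type]
    simp only [l1, l2]
    rw [Finset.sum_neg_distrib, ← sub_eq_add_neg]
  have hrow : ∀ x : V, ((∑ i, ⟪ξ i, x⟫ ^ 2) + ∑ j, ⟪(η j : V), x⟫ ^ 2) = ⟪x, x⟫ := by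
    intro x
    have l1 : ∀ i : Fin r, ⟪x, e (Sum.inl i)⟫ * ⟪e (Sum.inl i), x⟫ = ⟪ξ i, x⟫ ^ 2 := by
      intro i
      simp only [he, Sum.elim_inl]
      rw [real_inner_comm x (ξ i), sq]
    have l2 : ∀ j : Fin m, ⟪x, e (Sum.inr j)⟫ * ⟪e (Sum.inr j), x⟫ = ⟪(η j : V), x⟫ ^ 2 := by
      intro j
      simp only [he, Sum.elim_inr]
      rw [real_inner_comm x, sq]
    rw [← b.sum_inner_mul_inner x x]
    simp only [hbe]
    rw [Fintype.sum_sum_type]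
    simp only [l1, l2]
  -- the named quantities
  set A : ℝ := ∑ i, ⟪ξ i, P (ξ i)⟫ with hA
  set B : ℝ := ∑ j, ⟪(η j : V), P ((η j : V))⟫ with hB
  set Q11 : ℝ := ∑ i, ∑ i', ⟪ξ i', P (ξ i)⟫ ^ 2 with hQ11
  set Q12 : ℝ := ∑ i, ∑ j, ⟪(η j : V), P (ξ i)⟫ ^ 2 with hQ12
  set Q21 : ℝ := ∑ j, ∑ i, ⟪ξ i, P ((η j : V))⟫ ^ 2 with hQ21
  set Q22 : ℝ := ∑ j, ∑ j', ⟪(η j' : V), P ((η j : V))⟫ ^ 2 with hQ22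
  -- traces
  have htrS : LinearMap.trace ℝ V S = (r : ℝ) - m := by
    rw [trace_eq_sum_inner_onb' b S]
    simp only [hbe]
    rw [Fintype.sum_sum_type]
    have t1 : ∀ i : Fin r, ⟪e (Sum.inl i), S (e (Sum.inl i))⟫ = (1 : ℝ) := by
      intro i; simp only [he, Sum.elim_inl]; rw [hSe1, hone1]
    have t2 : ∀ j : Fin m, ⟪e (Sum.inr j), S (e (Sum.inr j))⟫ = (-1 : ℝ) := by
      intro j; simp only [he, Sum.elim_inr]; rw [hSe2, inner_neg_right, hone2]
    simp only [t1, t2]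
    simp [sub_eq_add_neg]
  have htrP : LinearMap.trace ℝ V P = A + B := by
    rw [trace_eq_sum_inner_onb' b P]
    simp only [hbe]
    rw [Fintype.sum_sum_type, hA, hB]
    simp only [he, Sum.elim_inl, Sum.elim_inr]
  have htrSP : LinearMap.trace ℝ V (S ∘ₗ P) = A - B := by
    rw [trace_eq_sum_inner_onb' b (S ∘ₗ P)]
    simp only [hbe, LinearMap.comp_apply]
    rw [Fintype.sum_sum_type]
    have t1 : ∀ i : Fin r, ⟪e (Sum.inl i), S (P (e (Sum.inl i)))⟫ = ⟪ξ i, P (ξ i)⟫ := by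
      intro i; simp only [he, Sum.elim_inl]; rw [← hSsym, hSe1]
    have t2 : ∀ j : Fin m,
        ⟪e (Sum.inr j), S (P (e (Sum.inr j)))⟫ = -⟪(η j : V), P ((η j : V))⟫ := by
      intro j; simp only [he, Sum.elim_inr]; rw [← hSsym, hSe2, inner_neg_left]
    simp only [t1, t2]
    rw [Finset.sum_neg_distrib, ← sub_eq_add_neg, hA, hB]
  have htrSPSP : LinearMap.trace ℝ V (S ∘ₗ P ∘ₗ S ∘ₗ P) = Q11 - Q12 - Q21 + Q22 := by
    rw [trace_eq_sum_inner_onb' b (S ∘ₗ P ∘ₗ S ∘ₗ P)]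
    simp only [hbe, LinearMap.comp_apply]
    rw [Fintype.sum_sum_type]
    have t1 : ∀ i : Fin r, ⟪e (Sum.inl i), S (P (S (P (e (Sum.inl i)))))⟫ =
        (∑ i', ⟪ξ i', P (ξ i)⟫ ^ 2) - ∑ j, ⟪(η j : V), P (ξ i)⟫ ^ 2 := by
      intro i
      simp only [he, Sum.elim_inl]
      rw [← hSsym, hSe1, ← hPsym, hSx]
    have t2 : ∀ j : Fin m, ⟪e (Sum.inr j), S (P (S (P (e (Sum.inr j)))))⟫ =
        -((∑ i, ⟪ξ i, P ((η j : V))⟫ ^ 2) - ∑ j', ⟪(η j' : V), P ((η j : V))⟫ ^ 2) := by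
      intro j
      simp only [he, Sum.elim_inr]
      rw [← hSsym, hSe2, inner_neg_left, ← hPsym, hSx]
    simp only [t1, t2]
    rw [Finset.sum_sub_distrib, Finset.sum_neg_distrib, Finset.sum_sub_distrib,
      hQ11, hQ12, hQ21, hQ22]
    ring
  -- relations among the Q's
  have h3 : Q11 + Q12 = (r : ℝ) := by
    rw [hQ11, hQ12, ← Finset.sum_add_distrib]
    have t : ∀ i : Fin r,
        ((∑ i', ⟪ξ i', P (ξ i)⟫ ^ 2) + ∑ j, ⟪(η j : V), P (ξ i)⟫ ^ 2) = (1 : ℝ) := by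
      intro i; rw [hrow (P (ξ i)), hPP, hone1]
    simp only [t]
    simp
  have h4 : Q21 + Q22 = (m : ℝ) := by
    rw [hQ21, hQ22, ← Finset.sum_add_distrib]
    have t : ∀ j : Fin m,
        ((∑ i, ⟪ξ i, P ((η j : V))⟫ ^ 2) + ∑ j', ⟪(η j' : V), P ((η j : V))⟫ ^ 2) = (1 : ℝ) := by
      intro j; rw [hrow (P ((η j : V))), hPP, hone2]
    simp only [t]
    simp
  have h2 : Q12 = Q21 := by
    rw [hQ12, hQ21, Finset.sum_comm]
    refine Finset.sum_congr rfl fun j _ => Finset.sum_congr rfl fun i _ => ?_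
    rw [← hPsym, real_inner_comm]
  have hn' : (n : ℝ) = (r : ℝ) + m := by
    have hfr := Submodule.finrank_add_finrank_orthogonal (K := K)
    rw [hr, hn, ← hm] at hfr
    exact_mod_cast hfr.symm
  -- rewrite the RHS double sum
  have hRHS : (∑ i, ∑ j, if i = j then 0 else
      ⟪P (ξ i), ξ j⟫ ^ 2 - ⟪P (ξ i), ξ i⟫ * ⟪P (ξ j), ξ j⟫) = Q11 - A ^ 2 := by
    have t : ∀ i j : Fin r, (if i = j then (0 : ℝ) else
        ⟪P (ξ i), ξ j⟫ ^ 2 - ⟪P (ξ i), ξ i⟫ * ⟪P (ξ j), ξ j⟫) =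
        ⟪ξ j, P (ξ i)⟫ ^ 2 - ⟪ξ i, P (ξ i)⟫ * ⟪ξ j, P (ξ j)⟫ := by
      intro i j
      rcases eq_or_ne i j with h | h
      · subst h
        rw [if_pos rfl, real_inner_comm (P (ξ i)) (ξ i)]
        ring
      · rw [if_neg h, real_inner_comm (P (ξ i)) (ξ j), real_inner_comm (P (ξ i)) (ξ i),
          real_inner_comm (P (ξ j)) (ξ j)]
    simp only [t]
    simp only [Finset.sum_sub_distrib, ← Finset.sum_mul, ← Finset.mul_sum]
    rw [hQ11, hA]
    ring
  rw [htrS, htrP, htrSP, htrSPSP, hRHS]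
  linear_combination ((n : ℝ) + 3 * (r : ℝ) - (m : ℝ) - 1) * hn' + (-3) * h3 + h4 + 2 * h2
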